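/- Let A be an m×K matrix, δ ∈ (0,1), β ∈ (0,1], and suppose the row-sampled sketch C of c rows (sampled with probabilities π(i) ≥ β‖A_{i,:}‖₂²/‖A‖_F² and rescaled by 1/√(c·π(i))) satisfies the sketching bound ‖AᵀA − CᵀC‖_F ≤ ((1 + √(8β⁻¹log(1/δ)))/√(βc))·‖A‖_F² with probability at least 1−δ. If additionally λ_min(AᵀA) > ε > 0 and c ≥ ‖A‖_F⁴(1 + √(8β⁻¹log(1/δ)))²/(βε²), then with probability at least 1−δ: λ_min(CᵀC) ≥ λ_min(AᵀA) − ε > 0 and λ_min(CᵀC)/λ_max(CᵀC) ≥ (λ_min(AᵀA)/λ_max(AᵀA))·(λ_min(AᵀA) − ε)/(λ_min(AᵀA) + ε). -/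

import Mathlib

open Matrix Finset MeasureTheory

noncomputable section

/-- Squared Frobenius norm of a matrix. -/
def frobSq {ι κ : Type*} [Fintype ι] [Fintype κ] (A : Matrix ι κ ℝ) : ℝ :=
  ∑ i, ∑ j, (A i j) ^ 2

/-- Squared Euclidean norm of the `i`-th row of `A`. -/
def rowSq {m K : ℕ} (A : Matrix (Fin m) (Fin K) ℝ) (i : Fin m) : ℝ := ∑ j, (A i j) ^ 2

/-- The sketch matrix whose `j`-th row is `A_{f j,:} / √(c π(f j))`. -/
def sketch {m K : ℕ} (A : Matrix (Fin m) (Fin K) ℝ) (π : Fin m → ℝ) (c : ℕ)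
    (f : Fin c → Fin m) : Matrix (Fin c) (Fin K) ℝ :=
  Matrix.of fun j k => A (f j) k / Real.sqrt (c * π (f j))

/-- Smallest eigenvalue of a Hermitian (symmetric) matrix; junk value `0` otherwise. -/
def lamMin {K : ℕ} (B : Matrix (Fin K) (Fin K) ℝ) : ℝ :=
  if h : B.IsHermitian then ⨅ i, h.eigenvalues i else 0

/-- Largest eigenvalue of a Hermitian (symmetric) matrix; junk value `0` otherwise. -/
def lamMax {K : ℕ} (B : Matrix (Fin K) (Fin K) ℝ) : ℝ :=
  if h : B.IsHermitian then ⨆ i, h.eigenvalues i else 0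

section AuxLemmas
variable {K : ℕ}


lemma frobSq_nonneg {ι κ : Type*} [Fintype ι] [Fintype κ] (M : Matrix ι κ ℝ) : 0 ≤ frobSq M :=
  Finset.sum_nonneg fun _ _ => Finset.sum_nonneg fun _ _ => sq_nonneg _

lemma quad_abs_le (M : Matrix (Fin K) (Fin K) ℝ) (x : Fin K → ℝ) (hx : ∑ j, x j ^ 2 = 1) :
    |x ⬝ᵥ M *ᵥ x| ≤ Real.sqrt (frobSq M) := by
  have h1 : x ⬝ᵥ M *ᵥ x = ∑ p : Fin K × Fin K, M p.1 p.2 * (x p.1 * x p.2) := by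
    rw [Fintype.sum_prod_type]
    simp only [dotProduct, mulVec, Finset.mul_sum]
    exact Finset.sum_congr rfl fun i _ => Finset.sum_congr rfl fun j _ => by ring
  have h2 : (∑ p : Fin K × Fin K, M p.1 p.2 * (x p.1 * x p.2)) ^ 2 ≤
      (∑ p : Fin K × Fin K, (M p.1 p.2) ^ 2) * ∑ p : Fin K × Fin K, (x p.1 * x p.2) ^ 2 :=
    Finset.sum_mul_sq_le_sq_mul_sq _ _ _
  have h3 : (∑ p : Fin K × Fin K, (M p.1 p.2) ^ 2) = frobSq M := by
    rw [Fintype.sum_prod_type]; rfl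
  have h4 : (∑ p : Fin K × Fin K, (x p.1 * x p.2) ^ 2) = 1 := by
    rw [Fintype.sum_prod_type]
    simp only [mul_pow, ← Finset.mul_sum, ← Finset.sum_mul, hx, mul_one]
  have key : (x ⬝ᵥ M *ᵥ x) ^ 2 ≤ frobSq M := by
    rw [h1]; rw [h3, h4, mul_one] at h2; exact h2
  calc |x ⬝ᵥ M *ᵥ x| = Real.sqrt ((x ⬝ᵥ M *ᵥ x) ^ 2) := (Real.sqrt_sq_eq_abs _).symm
    _ ≤ Real.sqrt (frobSq M) := Real.sqrt_le_sqrt key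

lemma spectral_real {B : Matrix (Fin K) (Fin K) ℝ} (hB : B.IsHermitian) :
    B = (hB.eigenvectorUnitary : Matrix (Fin K) (Fin K) ℝ) *
      Matrix.diagonal hB.eigenvalues * (hB.eigenvectorUnitary : Matrix (Fin K) (Fin K) ℝ)ᴴ := by
  have := hB.spectral_theorem
  simpa [Matrix.star_eq_conjTranspose] using this

lemma sub_smul_posSemidef {B : Matrix (Fin K) (Fin K) ℝ} (hB : B.IsHermitian) {t : ℝ}
    (ht : ∀ i, t ≤ hB.eigenvalues i) : (B - t • 1).PosSemidef := by
  have hd : (Matrix.diagonal (fun i => hB.eigenvalues i - t)).PosSemidef :=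
    Matrix.posSemidef_diagonal_iff.mpr fun i => sub_nonneg.mpr (ht i)
  have h2 := hd.mul_mul_conjTranspose_same (hB.eigenvectorUnitary : Matrix (Fin K) (Fin K) ℝ)
  have hU : (hB.eigenvectorUnitary : Matrix (Fin K) (Fin K) ℝ) *
      (hB.eigenvectorUnitary : Matrix (Fin K) (Fin K) ℝ)ᴴ = 1 :=
    Matrix.mem_unitaryGroup_iff.mp hB.eigenvectorUnitary.2
  have key : (hB.eigenvectorUnitary : Matrix (Fin K) (Fin K) ℝ) *
      Matrix.diagonal (fun i => hB.eigenvalues i - t) *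
      (hB.eigenvectorUnitary : Matrix (Fin K) (Fin K) ℝ)ᴴ = B - t • 1 := by
    have hdiag : Matrix.diagonal (fun i => hB.eigenvalues i - t) =
        Matrix.diagonal hB.eigenvalues - t • 1 := by
      rw [← Matrix.diagonal_sub]
      congr 1
      ext i j
      by_cases h : i = j <;> simp [Matrix.diagonal_apply, Matrix.one_apply, h]
    rw [hdiag, Matrix.mul_sub, Matrix.sub_mul, ← spectral_real hB]
    congr 1
    rw [Matrix.mul_smul, Matrix.smul_mul, mul_one, hU]
  rwa [key] at h2

lemma smul_sub_posSemidef {B : Matrix (Fin K) (Fin K) ℝ} (hB : B.IsHermitian) {t : ℝ}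
    (ht : ∀ i, hB.eigenvalues i ≤ t) : (t • 1 - B).PosSemidef := by
  have hd : (Matrix.diagonal (fun i => t - hB.eigenvalues i)).PosSemidef :=
    Matrix.posSemidef_diagonal_iff.mpr fun i => sub_nonneg.mpr (ht i)
  have h2 := hd.mul_mul_conjTranspose_same (hB.eigenvectorUnitary : Matrix (Fin K) (Fin K) ℝ)
  have hU : (hB.eigenvectorUnitary : Matrix (Fin K) (Fin K) ℝ) *
      (hB.eigenvectorUnitary : Matrix (Fin K) (Fin K) ℝ)ᴴ = 1 :=
    Matrix.mem_unitaryGroup_iff.mp hB.eigenvectorUnitary.2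
  have key : (hB.eigenvectorUnitary : Matrix (Fin K) (Fin K) ℝ) *
      Matrix.diagonal (fun i => t - hB.eigenvalues i) *
      (hB.eigenvectorUnitary : Matrix (Fin K) (Fin K) ℝ)ᴴ = t • 1 - B := by
    have hdiag : Matrix.diagonal (fun i => t - hB.eigenvalues i) =
        t • 1 - Matrix.diagonal hB.eigenvalues := by
      rw [← Matrix.diagonal_sub]
      congr 1
      ext i j
      by_cases h : i = j <;> simp [Matrix.diagonal_apply, Matrix.one_apply, h]
    rw [hdiag, Matrix.mul_sub, Matrix.sub_mul, ← spectral_real hB]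
    congr 1
    rw [Matrix.mul_smul, Matrix.smul_mul, mul_one, hU]
  rwa [key] at h2

lemma rayleigh_min {B : Matrix (Fin K) (Fin K) ℝ} (hB : B.IsHermitian) (x : Fin K → ℝ) :
    lamMin B * (∑ j, x j ^ 2) ≤ x ⬝ᵥ B *ᵥ x := by
  have ht : ∀ i, lamMin B ≤ hB.eigenvalues i := fun i => by
    rw [lamMin, dif_pos hB]
    exact ciInf_le (Set.finite_range _).bddBelow i
  have hp := (sub_smul_posSemidef hB ht).dotProduct_mulVec_nonneg x
  have hexp : star x ⬝ᵥ (B - lamMin B • 1) *ᵥ x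
      = x ⬝ᵥ B *ᵥ x - lamMin B * (x ⬝ᵥ x) := by
    rw [Matrix.sub_mulVec, dotProduct_sub]
    simp [Matrix.smul_mulVec, dotProduct_smul]
  have hxx : x ⬝ᵥ x = ∑ j, x j ^ 2 := by
    simp [dotProduct, pow_two]
  rw [hexp, hxx] at hp
  linarith

lemma rayleigh_max {B : Matrix (Fin K) (Fin K) ℝ} (hB : B.IsHermitian) (x : Fin K → ℝ) :
    x ⬝ᵥ B *ᵥ x ≤ lamMax B * (∑ j, x j ^ 2) := by
  have ht : ∀ i, hB.eigenvalues i ≤ lamMax B := fun i => by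
    rw [lamMax, dif_pos hB]
    exact le_ciSup (Set.finite_range _).bddAbove i
  have hp := (smul_sub_posSemidef hB ht).dotProduct_mulVec_nonneg x
  have hexp : star x ⬝ᵥ (lamMax B • 1 - B) *ᵥ x
      = lamMax B * (x ⬝ᵥ x) - x ⬝ᵥ B *ᵥ x := by
    rw [Matrix.sub_mulVec, dotProduct_sub]
    simp [Matrix.smul_mulVec, dotProduct_smul]
  have hxx : x ⬝ᵥ x = ∑ j, x j ^ 2 := by
    simp [dotProduct, pow_two]
  rw [hexp, hxx] at hp
  linarith

lemma exists_unit_min {B : Matrix (Fin K) (Fin K) ℝ} (hB : B.IsHermitian) [NeZero K] :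
    ∃ v : Fin K → ℝ, (∑ j, v j ^ 2 = 1) ∧ v ⬝ᵥ B *ᵥ v = lamMin B := by
  obtain ⟨i, hi⟩ := exists_eq_ciInf_of_finite (f := hB.eigenvalues)
  refine ⟨(WithLp.equiv 2 _) (hB.eigenvectorBasis i), ?_, ?_⟩
  · have h := hB.eigenvectorBasis.orthonormal.1 i
    have h2 : ∑ j, ((WithLp.equiv 2 _) (hB.eigenvectorBasis i) j) ^ 2 = ‖hB.eigenvectorBasis i‖ ^ 2 := by
      rw [← real_inner_self_eq_norm_sq]
      simp [PiLp.inner_apply, pow_two]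
      simp [← pow_two, ← EuclideanSpace.real_norm_sq_eq, h]
    rw [h2, h]; norm_num
  · erw [Matrix.IsHermitian.mulVec_eigenvectorBasis]
    have h := hB.eigenvectorBasis.orthonormal.1 i
    have h2 : ((WithLp.equiv 2 _) (hB.eigenvectorBasis i) : Fin K → ℝ) ⬝ᵥ
        (hB.eigenvalues i • ((WithLp.equiv 2 _) (hB.eigenvectorBasis i) : Fin K → ℝ))
        = hB.eigenvalues i * ∑ j, ((WithLp.equiv 2 _) (hB.eigenvectorBasis i) j) ^ 2 := by
      simp [dotProduct, Finset.mul_sum, pow_two]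
      exact Finset.sum_congr rfl fun j _ => by ring
    have h3 : ∑ j, ((WithLp.equiv 2 _) (hB.eigenvectorBasis i) j) ^ 2 = 1 := by
      have : ∑ j, ((WithLp.equiv 2 _) (hB.eigenvectorBasis i) j) ^ 2 = ‖hB.eigenvectorBasis i‖ ^ 2 := by
        rw [← real_inner_self_eq_norm_sq]
        simp [PiLp.inner_apply, pow_two]
        simp [← pow_two, ← EuclideanSpace.real_norm_sq_eq, h]
      rw [this, h]; norm_num
    erw [h2, h3, mul_one, lamMin, dif_pos hB, hi]

lemma exists_unit_max {B : Matrix (Fin K) (Fin K) ℝ} (hB : B.IsHermitian) [NeZero K] :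
    ∃ v : Fin K → ℝ, (∑ j, v j ^ 2 = 1) ∧ v ⬝ᵥ B *ᵥ v = lamMax B := by
  obtain ⟨i, hi⟩ := exists_eq_ciSup_of_finite (f := hB.eigenvalues)
  refine ⟨(WithLp.equiv 2 _) (hB.eigenvectorBasis i), ?_, ?_⟩
  · have h := hB.eigenvectorBasis.orthonormal.1 i
    have h2 : ∑ j, ((WithLp.equiv 2 _) (hB.eigenvectorBasis i) j) ^ 2 = ‖hB.eigenvectorBasis i‖ ^ 2 := by
      rw [← real_inner_self_eq_norm_sq]
      simp [PiLp.inner_apply, pow_two]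
      simp [← pow_two, ← EuclideanSpace.real_norm_sq_eq, h]
    rw [h2, h]; norm_num
  · erw [Matrix.IsHermitian.mulVec_eigenvectorBasis]
    have h := hB.eigenvectorBasis.orthonormal.1 i
    have h2 : ((WithLp.equiv 2 _) (hB.eigenvectorBasis i) : Fin K → ℝ) ⬝ᵥ
        (hB.eigenvalues i • ((WithLp.equiv 2 _) (hB.eigenvectorBasis i) : Fin K → ℝ))
        = hB.eigenvalues i * ∑ j, ((WithLp.equiv 2 _) (hB.eigenvectorBasis i) j) ^ 2 := by
      simp [dotProduct, Finset.mul_sum, pow_two]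
      exact Finset.sum_congr rfl fun j _ => by ring
    have h3 : ∑ j, ((WithLp.equiv 2 _) (hB.eigenvectorBasis i) j) ^ 2 = 1 := by
      have : ∑ j, ((WithLp.equiv 2 _) (hB.eigenvectorBasis i) j) ^ 2 = ‖hB.eigenvectorBasis i‖ ^ 2 := by
        rw [← real_inner_self_eq_norm_sq]
        simp [PiLp.inner_apply, pow_two]
        simp [← pow_two, ← EuclideanSpace.real_norm_sq_eq, h]
      rw [this, h]; norm_num
    erw [h2, h3, mul_one, lamMax, dif_pos hB, hi]

lemma lamMin_le_lamMax {B : Matrix (Fin K) (Fin K) ℝ} (hB : B.IsHermitian) [NeZero K] :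
    lamMin B ≤ lamMax B := by
  have i : Fin K := Classical.arbitrary _
  rw [lamMin, lamMax, dif_pos hB, dif_pos hB]
  exact le_trans (ciInf_le (Set.finite_range _).bddBelow i)
    (le_ciSup (Set.finite_range _).bddAbove i)

lemma lamMin_perturb {S T : Matrix (Fin K) (Fin K) ℝ} (hS : S.IsHermitian)
    (hT : T.IsHermitian) [NeZero K] :
    lamMin T - Real.sqrt (frobSq (T - S)) ≤ lamMin S := by
  obtain ⟨v, hv1, hv2⟩ := exists_unit_min hS
  have h1 := rayleigh_min hT v
  have h2 := quad_abs_le (T - S) v hv1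
  have h3 : v ⬝ᵥ (T - S) *ᵥ v = v ⬝ᵥ T *ᵥ v - v ⬝ᵥ S *ᵥ v := by
    rw [Matrix.sub_mulVec, dotProduct_sub]
  rw [hv1, mul_one] at h1
  rw [h3] at h2
  have := abs_le.mp h2
  linarith [hv2, this.1, this.2]

lemma lamMax_perturb {S T : Matrix (Fin K) (Fin K) ℝ} (hS : S.IsHermitian)
    (hT : T.IsHermitian) [NeZero K] :
    lamMax S ≤ lamMax T + Real.sqrt (frobSq (T - S)) := by
  obtain ⟨v, hv1, hv2⟩ := exists_unit_max hS
  have h1 := rayleigh_max hT v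
  have h2 := quad_abs_le (T - S) v hv1
  have h3 : v ⬝ᵥ (T - S) *ᵥ v = v ⬝ᵥ T *ᵥ v - v ⬝ᵥ S *ᵥ v := by
    rw [Matrix.sub_mulVec, dotProduct_sub]
  rw [hv1, mul_one] at h1
  rw [h3] at h2
  have := abs_le.mp h2
  linarith [hv2, this.1, this.2]

end AuxLemmas

lemma real_iInf_empty (f : Fin 0 → ℝ) : ⨅ i, f i = 0 := by
  rw [iInf, Set.range_eq_empty, Real.sInf_empty]

theorem stmt6 {m K c : ℕ}
    (A : Matrix (Fin m) (Fin K) ℝ)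
    {Ω : Type*} [MeasurableSpace Ω] (μ : Measure Ω) [IsProbabilityMeasure μ]
    (δ β ε : ℝ) (hδ : δ ∈ Set.Ioo (0 : ℝ) 1) (hβ : β ∈ Set.Ioc (0 : ℝ) 1)
    (π : Fin m → ℝ) (hπnn : ∀ i, 0 ≤ π i) (hπsum : ∑ i, π i = 1)
    (hdom : ∀ i, β * rowSq A i / frobSq A ≤ π i)
    (C : Ω → Matrix (Fin c) (Fin K) ℝ)
    (hform : ∀ ω, ∃ f : Fin c → Fin m, C ω = sketch A π c f)
    (hsketch : ENNReal.ofReal (1 - δ) ≤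
      μ {ω | Real.sqrt (frobSq (Aᵀ * A - (C ω)ᵀ * C ω)) ≤
        (1 + Real.sqrt (8 * β⁻¹ * Real.log δ⁻¹)) / Real.sqrt (β * c) * frobSq A})
    (hε : 0 < ε) (hεlt : ε < lamMin (Aᵀ * A))
    (hc : (frobSq A) ^ 2 * (1 + Real.sqrt (8 * β⁻¹ * Real.log δ⁻¹)) ^ 2 / (β * ε ^ 2)
      ≤ (c : ℝ)) :
    ENNReal.ofReal (1 - δ) ≤
      μ {ω | lamMin (Aᵀ * A) - ε ≤ lamMin ((C ω)ᵀ * C ω) ∧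
        0 < lamMin ((C ω)ᵀ * C ω) ∧
        lamMin (Aᵀ * A) / lamMax (Aᵀ * A) *
            ((lamMin (Aᵀ * A) - ε) / (lamMin (Aᵀ * A) + ε))
          ≤ lamMin ((C ω)ᵀ * C ω) / lamMax ((C ω)ᵀ * C ω)} := by
  obtain ⟨hβ0, hβ1⟩ := hβ
  have hr : 0 ≤ Real.sqrt (8 * β⁻¹ * Real.log δ⁻¹) := Real.sqrt_nonneg _
  set r := Real.sqrt (8 * β⁻¹ * Real.log δ⁻¹) with hr_def
  set F := frobSq A with hF_def
  -- K ≠ 0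
  rcases Nat.eq_zero_or_pos K with hK0 | hK
  · exfalso
    subst hK0
    have : lamMin (Aᵀ * A) = 0 := by
      rw [lamMin]
      split
      · exact real_iInf_empty _
      · rfl
    linarith [hεlt, hε, this ▸ hεlt]
  haveI : NeZero K := ⟨hK.ne'⟩
  have hT : (Aᵀ * A).IsHermitian := by
    have := Matrix.isHermitian_conjTranspose_mul_self A
    simpa using this
  set T := Aᵀ * A with hT_def
  have haε : 0 < lamMin T - ε := sub_pos.mpr hεlt
  -- F > 0
  have hF_pos : 0 < F := by
    set x : Fin K → ℝ := Pi.single (⟨0, hK⟩ : Fin K) 1 with hx_def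
    have hx1 : ∑ j, x j ^ 2 = 1 := by
      simp [hx_def, Pi.single_apply]
    have h1 := rayleigh_min hT x
    rw [hx1, mul_one] at h1
    have h2 : x ⬝ᵥ T *ᵥ x = ∑ i, A i ⟨0, hK⟩ ^ 2 := by
      simp [hx_def, dotProduct, Matrix.mulVec, Pi.single_apply, hT_def,
        Matrix.mul_apply, Matrix.transpose_apply, pow_two]
    have h3 : ∑ i, A i ⟨0, hK⟩ ^ 2 ≤ F := by
      rw [hF_def, frobSq, Finset.sum_comm]
      exact Finset.single_le_sum (f := fun j => ∑ i, A i j ^ 2)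
        (fun j _ => Finset.sum_nonneg fun i _ => sq_nonneg _) (Finset.mem_univ _)
    linarith [hεlt, hε]
  have hc_pos : (0:ℝ) < c := lt_of_lt_of_le (by positivity) hc
  -- bound ≤ ε
  have hbound : (1 + r) / Real.sqrt (β * c) * F ≤ ε := by
    have hsq : 0 < Real.sqrt (β * c) := Real.sqrt_pos.mpr (by positivity)
    rw [div_mul_eq_mul_div, div_le_iff₀ hsq]
    have h1 : F ^ 2 * (1 + r) ^ 2 ≤ β * c * ε ^ 2 := by
      rw [div_le_iff₀ (by positivity)] at hc
      nlinarith [hc]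
    have h2 : ((1 + r) * F) ^ 2 ≤ (ε * Real.sqrt (β * c)) ^ 2 := by
      rw [mul_pow, mul_pow, Real.sq_sqrt (by positivity : (0:ℝ) ≤ β * c)]
      nlinarith [h1]
    exact le_of_pow_le_pow_left₀ two_ne_zero (by positivity) h2
  refine le_trans hsketch (measure_mono ?_)
  intro ω hω
  simp only [Set.mem_setOf_eq] at hω ⊢
  set S := (C ω)ᵀ * C ω with hS_def
  have hS : S.IsHermitian := by
    have := Matrix.isHermitian_conjTranspose_mul_self (C ω)
    simpa using this
  have hs_le : Real.sqrt (frobSq (T - S)) ≤ ε := le_trans hω hbound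
  have hs_nn : 0 ≤ Real.sqrt (frobSq (T - S)) := Real.sqrt_nonneg _
  have hmin := lamMin_perturb hS hT
  have hmax := lamMax_perturb hS hT
  have h1 : lamMin T - ε ≤ lamMin S := by linarith
  have ha' : 0 < lamMin S := lt_of_lt_of_le haε h1
  have hab : lamMin T ≤ lamMax T := lamMin_le_lamMax hT
  have ha'b' : lamMin S ≤ lamMax S := lamMin_le_lamMax hS
  have hb' : 0 < lamMax S := lt_of_lt_of_le ha' ha'b'
  have hb'le : lamMax S ≤ lamMax T + ε := by linarith
  have hb_pos : 0 < lamMax T := by linarith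
  refine ⟨h1, ha', ?_⟩
  rw [div_mul_div_comm]
  have step1 : (lamMin T - ε) / (lamMax T + ε) ≤ lamMin S / lamMax S :=
    div_le_div₀ (le_of_lt ha') h1 hb' hb'le
  have step2 : lamMin T * (lamMin T - ε) / (lamMax T * (lamMin T + ε)) ≤
      (lamMin T - ε) / (lamMax T + ε) := by
    have hd1 : 0 < lamMax T * (lamMin T + ε) := mul_pos hb_pos (by linarith)
    rw [div_le_div_iff₀ hd1 (by positivity)]
    nlinarith [mul_nonneg (mul_nonneg haε.le hε.le) (sub_nonneg.mpr hab)]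
  exact le_trans step2 step1

end
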